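/- Let R be a right noetherian ring, z a central element of R, and S = R/zR the quotient ring by the two-sided ideal generated by z. Let F be an indecomposable injective right S-module and let E be an injective right R-module containing F (viewed as an R-module by restriction of scalars along the quotient map) as an essential submodule. Then for every finitely generated right R-module M: Hom_R(M, E) ≠ 0 if and only if Hom_S(M/Mz, F) ≠ 0, where M/Mz carries its natural right S-module structure. (This is the continuity of the induced map f* : injspec(S) → injspec(R): the preimage of the basic closed set (M) is the basic closed set (M ⊗_R S).) -/

import Mathlib

open MulOpposite

universe u

/-- A module is indecomposable if it is nonzero and is not the internal direct sum of
two nonzero submodules. -/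
def IsIndecomposable (R M : Type*) [Ring R] [AddCommGroup M] [Module R M] : Prop :=
  (∃ x : M, x ≠ 0) ∧
    ∀ A B : Submodule R M, A ⊓ B = ⊥ → A ⊔ B = ⊤ → A = ⊥ ∨ B = ⊥

/-- A submodule is essential if it meets every nonzero submodule nontrivially. -/
def IsEssentialSubmodule {R M : Type*} [Ring R] [AddCommGroup M] [Module R M]
    (A : Submodule R M) : Prop :=
  ∀ N : Submodule R M, N ≠ ⊥ → N ⊓ A ≠ ⊥

theorem stmt19 {R S : Type u} [Ring R] [Ring S] [IsNoetherian Rᵐᵒᵖ R]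
    (z : R) (hz : z ∈ Set.center R)
    -- `S = R/zR`, presented as a surjective ring homomorphism with kernel `zR`:
    (g : R →+* S) (hg : Function.Surjective g)
    (hker : ∀ r : R, g r = 0 ↔ ∃ a : R, r = z * a)
    -- `F` is an indecomposable injective right `S`-module:
    {F : Type u} [AddCommGroup F] [Module Sᵐᵒᵖ F]
    (hFind : IsIndecomposable Sᵐᵒᵖ F) (hFinj : Module.Injective Sᵐᵒᵖ F)
    -- `F` viewed as a right `R`-module by restriction of scalars along `g`:
    [Module Rᵐᵒᵖ F] (hresF : ∀ (r : R) (x : F), (op r : Rᵐᵒᵖ) • x = (op (g r) : Sᵐᵒᵖ) • x)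
    -- `E` is an injective right `R`-module containing `F` as an essential submodule:
    {E : Type u} [AddCommGroup E] [Module Rᵐᵒᵖ E] (hEinj : Module.Injective Rᵐᵒᵖ E)
    (ι : F →ₗ[Rᵐᵒᵖ] E) (hι : Function.Injective ι)
    (hess : IsEssentialSubmodule (LinearMap.range ι))
    -- `M` is a finitely generated right `R`-module:
    (M : Type u) [AddCommGroup M] [Module Rᵐᵒᵖ M] (hMfg : Module.Finite Rᵐᵒᵖ M)
    -- `Q = M/Mz` with its natural right `S`-module structure, presented as a
    -- surjective `R`-linear map `π : M → Q` whose kernel is `Mz`: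
    (Q : Type u) [AddCommGroup Q] [Module Sᵐᵒᵖ Q]
    [Module Rᵐᵒᵖ Q] (hresQ : ∀ (r : R) (x : Q), (op r : Rᵐᵒᵖ) • x = (op (g r) : Sᵐᵒᵖ) • x)
    (π : M →ₗ[Rᵐᵒᵖ] Q) (hπ : Function.Surjective π)
    (hkerπ : ∀ m : M, π m = 0 ↔ ∃ m' : M, m = (op z : Rᵐᵒᵖ) • m') :
    (∃ φ : M →ₗ[Rᵐᵒᵖ] E, φ ≠ 0) ↔ (∃ ψ : Q →ₗ[Sᵐᵒᵖ] F, ψ ≠ 0) := by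
  classical
  have hgz : g z = 0 := (hker z).mpr ⟨1, (mul_one z).symm⟩
  -- `op z` commutes with every scalar action, in any right `R`-module
  have hzc : ∀ {V : Type u} [AddCommGroup V] [Module Rᵐᵒᵖ V] (c : Rᵐᵒᵖ) (x : V),
      (op z : Rᵐᵒᵖ) • (c • x) = c • ((op z : Rᵐᵒᵖ) • x) := by
    intro V _ _ c x
    rw [← op_unop c, ← mul_smul, ← mul_smul, ← op_mul, ← op_mul, hz.comm]
  have hzcp : ∀ {V : Type u} [AddCommGroup V] [Module Rᵐᵒᵖ V] (n : ℕ) (c : Rᵐᵒᵖ) (x : V),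
      ((op z : Rᵐᵒᵖ) ^ n) • (c • x) = c • (((op z : Rᵐᵒᵖ) ^ n) • x) := by
    intro V _ _ n c x
    induction n generalizing x with
    | zero => simp
    | succ n ih => rw [pow_succ, mul_smul, mul_smul, hzc, ih]
  have hFz : ∀ f : F, (op z : Rᵐᵒᵖ) • f = 0 := by
    intro f
    rw [hresF, hgz, op_zero, zero_smul]
  constructor
  · -- hard direction
    rintro ⟨φ, hφ⟩
    -- every element of E is killed by a power of z
    have htor : ∀ e : E, ∃ n : ℕ, ((op z : Rᵐᵒᵖ) ^ n) • e = 0 := by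
      intro e
      let I : ℕ →o Submodule Rᵐᵒᵖ R :=
        ⟨fun n =>
          { carrier := {r : R | (op r : Rᵐᵒᵖ) • (((op z : Rᵐᵒᵖ) ^ n) • e) = 0}
            add_mem' := by
              intro a b ha hb
              simp only [Set.mem_setOf_eq] at ha hb ⊢
              rw [op_add, add_smul, ha, hb, add_zero]
            zero_mem' := by
              simp only [Set.mem_setOf_eq, op_zero, zero_smul]
            smul_mem' := by
              intro c r hr
              simp only [Set.mem_setOf_eq] at hr ⊢
              have hcr : (c • r : R) = r * unop c := rfl
              rw [hcr, op_mul, op_unop, mul_smul, hr, smul_zero] },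
          by
            apply monotone_nat_of_le_succ
            intro n r hr
            simp only [Submodule.mem_mk, AddSubmonoid.mem_mk, AddSubsemigroup.mem_mk,
              Set.mem_setOf_eq] at hr ⊢
            rw [pow_succ', mul_smul, ← hzc, hr, smul_zero]⟩
      obtain ⟨n, hn⟩ := monotone_stabilizes_iff_noetherian.mpr ‹IsNoetherian Rᵐᵒᵖ R› I
      refine ⟨n, ?_⟩
      by_contra h0
      have hne : Submodule.span Rᵐᵒᵖ {((op z : Rᵐᵒᵖ) ^ n) • e} ≠ ⊥ := by
        rwa [Ne, Submodule.span_singleton_eq_bot]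
      obtain ⟨x, hx, hxne⟩ := (Submodule.ne_bot_iff _).mp (hess _ hne)
      rw [Submodule.mem_inf] at hx
      obtain ⟨hx1, hx2⟩ := hx
      obtain ⟨c, hc⟩ := Submodule.mem_span_singleton.mp hx1
      obtain ⟨f0, hf0⟩ := hx2
      have hzx : (op z : Rᵐᵒᵖ) • x = 0 := by
        rw [← hf0, ← map_smul, hFz f0, map_zero]
      have hmem : unop c ∈ I (n + 1) := by
        show (op (unop c) : Rᵐᵒᵖ) • (((op z : Rᵐᵒᵖ) ^ (n + 1)) • e) = 0
        rw [op_unop, pow_succ', mul_smul, ← hzc, hc, hzx]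
      have hmem' : unop c ∈ I n := by
        rw [hn (n + 1) (Nat.le_succ n)]
        exact hmem
      have hx0 : x = 0 := by
        have : (op (unop c) : Rᵐᵒᵖ) • (((op z : Rᵐᵒᵖ) ^ n) • e) = 0 := hmem'
        rw [op_unop] at this
        rw [← hc]
        exact this
      exact hxne hx0
    -- uniform bound on the finitely generated module M
    obtain ⟨s, hs⟩ := hMfg.fg_top
    set N : ℕ := s.sup fun m => (htor (φ m)).choose with hN
    have hNbound : ∀ m : M, ((op z : Rᵐᵒᵖ) ^ N) • φ m = 0 := by
      let T : Submodule Rᵐᵒᵖ M :=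
        { carrier := {m : M | ((op z : Rᵐᵒᵖ) ^ N) • φ m = 0}
          add_mem' := by
            intro a b ha hb
            simp only [Set.mem_setOf_eq] at ha hb ⊢
            rw [map_add, smul_add, ha, hb, add_zero]
          zero_mem' := by simp
          smul_mem' := by
            intro c m hm
            simp only [Set.mem_setOf_eq] at hm ⊢
            rw [map_smul, hzcp, hm, smul_zero] }
      have hsT : (s : Set M) ⊆ T := by
        intro m hm
        show ((op z : Rᵐᵒᵖ) ^ N) • φ m = 0
        have h1 := (htor (φ m)).choose_spec
        have h2 : (htor (φ m)).choose ≤ N :=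
          Finset.le_sup (f := fun m => (htor (φ m)).choose) hm
        rw [← Nat.sub_add_cancel h2, pow_add, mul_smul, h1, smul_zero]
      have hTtop : T = ⊤ := by
        refine top_unique ?_
        rw [← hs]
        exact Submodule.span_le.mpr hsT
      intro m
      have : m ∈ T := by rw [hTtop]; exact Submodule.mem_top
      exact this
    -- minimal power
    have hex : ∃ n : ℕ, ∀ m : M, ((op z : Rᵐᵒᵖ) ^ n) • φ m = 0 := ⟨N, hNbound⟩
    set N0 : ℕ := Nat.find hex with hN0def
    have hN0 : ∀ m : M, ((op z : Rᵐᵒᵖ) ^ N0) • φ m = 0 := Nat.find_spec hex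
    have hN0pos : N0 ≠ 0 := by
      intro h
      apply hφ
      apply LinearMap.ext
      intro m
      have := hN0 m
      rw [h, pow_zero, one_smul] at this
      exact this
    obtain ⟨k, hk0⟩ := Nat.exists_eq_succ_of_ne_zero hN0pos
    have hk : N0 = k + 1 := hk0
    have hkm : ∃ m0 : M, ((op z : Rᵐᵒᵖ) ^ k) • φ m0 ≠ 0 := by
      by_contra h
      push_neg at h
      exact Nat.find_min hex (show k < N0 by omega) h
    obtain ⟨m0, hm0⟩ := hkm
    -- the shifted map φ'
    set φ' : M →ₗ[Rᵐᵒᵖ] E :=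
      { toFun := fun m => ((op z : Rᵐᵒᵖ) ^ k) • φ m
        map_add' := by
          intro a b
          show ((op z : Rᵐᵒᵖ) ^ k) • φ (a + b) =
            ((op z : Rᵐᵒᵖ) ^ k) • φ a + ((op z : Rᵐᵒᵖ) ^ k) • φ b
          rw [map_add, smul_add]
        map_smul' := by
          intro c m
          simp only [RingHom.id_apply]
          show ((op z : Rᵐᵒᵖ) ^ k) • φ (c • m) = c • (((op z : Rᵐᵒᵖ) ^ k) • φ m)
          rw [map_smul, hzcp] } with hφ'def
    have hφ'app : ∀ m : M, φ' m = ((op z : Rᵐᵒᵖ) ^ k) • φ m := fun m => rfl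
    have hφ'z : ∀ m : M, (op z : Rᵐᵒᵖ) • φ' m = 0 := by
      intro m
      rw [hφ'app, ← mul_smul, ← pow_succ', ← hk]
      exact hN0 m
    have hφ'ker : ∀ m : M, π m = 0 → φ' m = 0 := by
      intro m hm
      obtain ⟨m', hm'⟩ := (hkerπ m).mp hm
      rw [hφ'app, hm', map_smul, ← mul_smul, ← pow_succ, ← hk]
      exact hN0 m'
    have hm0' : φ' m0 ≠ 0 := hm0
    -- the submodule A = ann_E(z)
    set Az : Submodule Rᵐᵒᵖ E :=
      { carrier := {e : E | (op z : Rᵐᵒᵖ) • e = 0}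
        add_mem' := by
          intro a b ha hb
          simp only [Set.mem_setOf_eq] at ha hb ⊢
          rw [smul_add, ha, hb, add_zero]
        zero_mem' := by simp
        smul_mem' := by
          intro c x hx
          simp only [Set.mem_setOf_eq] at hx ⊢
          rw [hzc, hx, smul_zero] } with hAzdef
    have hAzmem : ∀ e : E, e ∈ Az ↔ (op z : Rᵐᵒᵖ) • e = 0 := fun e => Iff.rfl
    -- a set-theoretic section of g
    set secS : S → R := Function.surjInv hg with hsecSdef
    have hsecval : ∀ s : S, g (secS s) = s := fun s => Function.surjInv_eq hg s
    -- well-definedness of the S-action on Az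
    have hwd : ∀ (r r' : R) (e : E), (op z : Rᵐᵒᵖ) • e = 0 → g r = g r' →
        (op r : Rᵐᵒᵖ) • e = (op r' : Rᵐᵒᵖ) • e := by
      intro r r' e he hgr
      have h0 : g (r - r') = 0 := by rw [map_sub, hgr, sub_self]
      obtain ⟨a, ha⟩ := (hker _).mp h0
      have h1 : (op (r - r') : Rᵐᵒᵖ) • e = 0 := by
        rw [ha, op_mul, mul_smul, he, smul_zero]
      rw [op_sub, sub_smul] at h1
      exact sub_eq_zero.mp h1
    letI : SMul Sᵐᵒᵖ ↥Az :=
      ⟨fun c a => ⟨(op (secS (unop c)) : Rᵐᵒᵖ) • (a : E), by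
        have ha : (op z : Rᵐᵒᵖ) • (a : E) = 0 := a.2
        show (op z : Rᵐᵒᵖ) • _ = 0
        rw [hzc, ha, smul_zero]⟩⟩
    have hsmul_def : ∀ (c : Sᵐᵒᵖ) (a : ↥Az),
        ((c • a : ↥Az) : E) = (op (secS (unop c)) : Rᵐᵒᵖ) • (a : E) := fun _ _ => rfl
    have hsmul_char : ∀ (r : R) (a : ↥Az),
        (((op (g r) : Sᵐᵒᵖ) • a : ↥Az) : E) = (op r : Rᵐᵒᵖ) • (a : E) := by
      intro r a
      rw [hsmul_def]
      exact hwd _ _ _ a.2 (by rw [hsecval, unop_op])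
    letI : Module Sᵐᵒᵖ ↥Az :=
      { smul := (· • ·)
        one_smul := by
          intro a
          apply Subtype.ext
          rw [hsmul_def]
          have h1 : g (secS (unop (1 : Sᵐᵒᵖ))) = g 1 := by
            rw [hsecval, unop_one, map_one]
          rw [hwd _ _ _ a.2 h1, op_one, one_smul]
        mul_smul := by
          intro x y a
          apply Subtype.ext
          rw [hsmul_def, hsmul_def, hsmul_def, ← mul_smul, ← op_mul]
          exact hwd _ _ _ a.2 (by
            rw [hsecval, map_mul, hsecval, hsecval, unop_mul])
        smul_add := by
          intro c a b
          apply Subtype.ext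
          show (op (secS (unop c)) : Rᵐᵒᵖ) • ((a : E) + (b : E)) =
            (op (secS (unop c)) : Rᵐᵒᵖ) • (a : E) + (op (secS (unop c)) : Rᵐᵒᵖ) • (b : E)
          exact smul_add _ _ _
        smul_zero := by
          intro c
          apply Subtype.ext
          show (op (secS (unop c)) : Rᵐᵒᵖ) • (0 : E) = (0 : E)
          exact smul_zero _
        add_smul := by
          intro x y a
          apply Subtype.ext
          show (op (secS (unop (x + y))) : Rᵐᵒᵖ) • (a : E) =
            (op (secS (unop x)) : Rᵐᵒᵖ) • (a : E) + (op (secS (unop y)) : Rᵐᵒᵖ) • (a : E)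
          rw [← add_smul, ← op_add]
          exact hwd _ _ _ a.2 (by
            rw [hsecval, map_add, hsecval, hsecval, unop_add])
        zero_smul := by
          intro a
          apply Subtype.ext
          show (op (secS (unop (0 : Sᵐᵒᵖ))) : Rᵐᵒᵖ) • (a : E) = (0 : E)
          have h1 : g (secS (unop (0 : Sᵐᵒᵖ))) = g 0 := by
            rw [hsecval, unop_zero, map_zero]
          rw [hwd _ _ _ a.2 h1, op_zero, zero_smul] }
    -- the corestriction ι' : F → Az, S-linearly
    have hιz : ∀ f : F, (op z : Rᵐᵒᵖ) • ι f = 0 := by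
      intro f
      rw [← map_smul, hFz f, map_zero]
    set ι' : F →ₗ[Sᵐᵒᵖ] ↥Az :=
      { toFun := fun f => ⟨ι f, hιz f⟩
        map_add' := fun a b => Subtype.ext (map_add ι a b)
        map_smul' := by
          intro c f
          apply Subtype.ext
          simp only [RingHom.id_apply]
          rw [hsmul_def]
          show ι (c • f) = (op (secS (unop c)) : Rᵐᵒᵖ) • ι f
          have h1 : (op (secS (unop c)) : Rᵐᵒᵖ) • f = c • f := by
            rw [hresF, hsecval, op_unop]
          rw [← h1, map_smul] } with hι'def
    have hι' : Function.Injective ι' := by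
      intro a b h
      exact hι (congrArg Subtype.val h)
    obtain ⟨σ, hσ⟩ := hFinj.out ι' hι' LinearMap.id
    -- the factored map ψQ : Q → Az
    set secM : Q → M := Function.surjInv hπ with hsecMdef
    have hsecM : ∀ q : Q, π (secM q) = q := fun q => Function.surjInv_eq hπ q
    have hwdM : ∀ m m' : M, π m = π m' → φ' m = φ' m' := by
      intro m m' h
      have h0 : π (m - m') = 0 := by rw [map_sub, h, sub_self]
      have h1 := hφ'ker _ h0
      rw [map_sub, sub_eq_zero] at h1
      exact h1
    set ψQ : Q →ₗ[Sᵐᵒᵖ] ↥Az :=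
      { toFun := fun q => ⟨φ' (secM q), hφ'z _⟩
        map_add' := by
          intro q q'
          apply Subtype.ext
          show φ' (secM (q + q')) = φ' (secM q) + φ' (secM q')
          rw [← map_add]
          exact hwdM _ _ (by rw [map_add, hsecM, hsecM, hsecM])
        map_smul' := by
          intro c q
          apply Subtype.ext
          simp only [RingHom.id_apply]
          rw [hsmul_def]
          show φ' (secM (c • q)) = (op (secS (unop c)) : Rᵐᵒᵖ) • φ' (secM q)
          rw [← map_smul]
          exact hwdM _ _ (by
            rw [hsecM, map_smul, hsecM, hresQ, hsecval, op_unop]) } with hψQdef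
    refine ⟨σ ∘ₗ ψQ, ?_⟩
    intro hcontra
    have hσ0 : ∀ q : Q, σ (ψQ q) = 0 := by
      intro q
      have := LinearMap.ext_iff.mp hcontra q
      simpa using this
    -- derive a contradiction using essentiality
    have he0A : (op z : Rᵐᵒᵖ) • φ' m0 = 0 := hφ'z m0
    have hne : Submodule.span Rᵐᵒᵖ {φ' m0} ≠ ⊥ := by
      rwa [Ne, Submodule.span_singleton_eq_bot]
    obtain ⟨x, hx, hxne⟩ := (Submodule.ne_bot_iff _).mp (hess _ hne)
    rw [Submodule.mem_inf] at hx
    obtain ⟨hx1, hx2⟩ := hx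
    obtain ⟨c, hc⟩ := Submodule.mem_span_singleton.mp hx1
    obtain ⟨f0, hf0eq⟩ := hx2
    have hf0 : f0 ≠ 0 := by
      rintro rfl
      rw [map_zero] at hf0eq
      exact hxne hf0eq.symm
    have hxA : (op z : Rᵐᵒᵖ) • x = 0 := by
      rw [← hc, hzc, he0A, smul_zero]
    have hkey : (⟨x, hxA⟩ : ↥Az) = (op (g (unop c)) : Sᵐᵒᵖ) • (⟨φ' m0, he0A⟩ : ↥Az) := by
      apply Subtype.ext
      rw [hsmul_char]
      show x = (op (unop c) : Rᵐᵒᵖ) • φ' m0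
      rw [op_unop]
      exact hc.symm
    have hpsiQ : ψQ (π m0) = (⟨φ' m0, he0A⟩ : ↥Az) :=
      Subtype.ext (hwdM _ _ (hsecM _))
    have hf00 : f0 = 0 := by
      have h1 : σ (ι' f0) = f0 := by simpa using hσ f0
      have h2 : ι' f0 = (⟨x, hxA⟩ : ↥Az) := Subtype.ext hf0eq
      rw [h2, hkey, map_smul, ← hpsiQ, hσ0 (π m0), smul_zero] at h1
      exact h1.symm
    exact hf0 hf00
  · -- easy direction
    rintro ⟨ψ, hψ⟩
    have hψne : ∃ q : Q, ψ q ≠ 0 := by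
      by_contra h
      push_neg at h
      exact hψ (LinearMap.ext h)
    obtain ⟨q0, hq0⟩ := hψne
    obtain ⟨mq, hmq⟩ := hπ q0
    refine ⟨{ toFun := fun m => ι (ψ (π m))
              map_add' := by
                intro a b
                show ι (ψ (π (a + b))) = ι (ψ (π a)) + ι (ψ (π b))
                rw [map_add, map_add, map_add]
              map_smul' := by
                intro c m
                simp only [RingHom.id_apply]
                rw [map_smul π c m, ← op_unop c, hresQ, map_smul ψ, ← hresF, map_smul] }, ?_⟩
    intro h0
    have h1 := LinearMap.ext_iff.mp h0 mq
    simp only [LinearMap.coe_mk, AddHom.coe_mk, LinearMap.zero_apply] at h1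
    have h2 : ψ (π mq) = 0 := hι (by rw [map_zero]; exact h1)
    rw [hmq] at h2
    exact hq0 h2
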